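/- Let K ≥ 1, ε_t, ε_r ∈ (0,1], c_t, c_r > 0, σ > 0 and ζ' ≥ 0 be real constants, and define the normalized mean square error at pilot power P > 0 by Ξ(P) = (1/2)·((P·ζ' + σ)/(K·P·ε_t·c_t + P·ζ' + σ) + (P·ζ' + σ)/(K·P·ε_r·c_r + P·ζ' + σ)). Then, as P → ∞, Ξ(P) tends to (1/2)·(ζ'/(K·ε_t·c_t + ζ') + ζ'/(K·ε_r·c_r + ζ')). In particular, for ideal transceiver hardware (ζ' = 0) the N-MSE tends to 0, while for non-ideal hardware (ζ' > 0) the N-MSE tends to a strictly positive performance floor. -/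

import Mathlib

open Filter Topology

private lemma nmse_aux (K ε c σ ζ' : ℝ) (hε : 0 < ε)
    (hc : 0 < c) (hσ : 0 < σ) (hζ' : 0 ≤ ζ') (hK : 1 ≤ K) :
    Filter.Tendsto (fun P : ℝ => (P * ζ' + σ) / (K * P * ε * c + P * ζ' + σ))
      Filter.atTop (nhds (ζ' / (K * ε * c + ζ'))) := by
  have hKec : 0 < K * ε * c := by positivity
  have hd : 0 < K * ε * c + ζ' := by linarith
  have h0 : Tendsto (fun P : ℝ => σ / P) atTop (nhds 0) :=
    Filter.Tendsto.div_atTop tendsto_const_nhds tendsto_id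
  have hnum : Tendsto (fun P : ℝ => ζ' + σ / P) atTop (nhds (ζ' + 0)) :=
    tendsto_const_nhds.add h0
  have hden : Tendsto (fun P : ℝ => K * ε * c + ζ' + σ / P)
      atTop (nhds (K * ε * c + ζ' + 0)) := tendsto_const_nhds.add h0
  have hlim : Tendsto (fun P : ℝ => (ζ' + σ / P) / (K * ε * c + ζ' + σ / P))
      atTop (nhds (ζ' / (K * ε * c + ζ'))) := by
    have := hnum.div hden (by simpa using hd.ne')
    simpa only [add_zero, Pi.div_def] using this
  refine hlim.congr' ?_
  filter_upwards [eventually_gt_atTop (0 : ℝ)] with P hP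
  have hP' : P ≠ 0 := hP.ne'
  field_simp

/-- Equations (25)–(28): as the pilot power `P → ∞`, the normalized mean square error
`Ξ(P)` tends to the floor `(1/2)·(ζ'/(K ε_t c_t + ζ') + ζ'/(K ε_r c_r + ζ'))`;
the floor is `0` for ideal hardware (`ζ' = 0`) and strictly positive for
non-ideal hardware (`ζ' > 0`). -/
theorem nmse_high_power_floor
    (K εt εr ct cr σ ζ' : ℝ) (hK : 1 ≤ K)
    (hεt : 0 < εt) (hεt1 : εt ≤ 1) (hεr : 0 < εr) (hεr1 : εr ≤ 1)
    (hct : 0 < ct) (hcr : 0 < cr) (hσ : 0 < σ) (hζ' : 0 ≤ ζ') :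
    Filter.Tendsto
      (fun P : ℝ =>
        (1 / 2) * ((P * ζ' + σ) / (K * P * εt * ct + P * ζ' + σ)
          + (P * ζ' + σ) / (K * P * εr * cr + P * ζ' + σ)))
      Filter.atTop
      (nhds ((1 / 2) * (ζ' / (K * εt * ct + ζ') + ζ' / (K * εr * cr + ζ'))))
    ∧ (ζ' = 0 → (1 / 2) * (ζ' / (K * εt * ct + ζ') + ζ' / (K * εr * cr + ζ')) = 0)
    ∧ (0 < ζ' → 0 < (1 / 2) * (ζ' / (K * εt * ct + ζ') + ζ' / (K * εr * cr + ζ'))) := by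
  refine ⟨?_, ?_, ?_⟩
  · exact ((nmse_aux K εt ct σ ζ' hεt hct hσ hζ' hK).add
      (nmse_aux K εr cr σ ζ' hεr hcr hσ hζ' hK)).const_mul _
  · rintro rfl; simp
  · intro h
    have h1 : 0 < K * εt * ct + ζ' := by positivity
    have h2 : 0 < K * εr * cr + ζ' := by positivity
    positivity
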